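/- In the FLAG setting, for every u ∈ C: F(y_{T+1}) − F(u) ≤ L·D/T² + D·(Σ_{i=1}^d s_T(i) + δ·d)/(2·Σ_{k=1}^T η_k). -/

import Mathlib

open scoped RealInnerProductSpace
open scoped RealInnerProductSpace

lemma aux_le_of_forall {a c : ℝ} (h : ∀ t : ℝ, 0 < t → t < 1 → c * (1 - t) ≤ a) :
    c ≤ a := by
  by_contra hca
  push_neg at hca
  have hc0 : 0 < c := by nlinarith [h (1/2) (by norm_num) (by norm_num)]
  set t := min (1/2) ((c - a) / (2 * c)) with ht
  have ht0 : 0 < t := lt_min (by norm_num) (div_pos (by linarith) (by linarith))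
  have ht1 : t < 1 := lt_of_le_of_lt (min_le_left _ _) (by norm_num)
  have h1 := h t ht0 ht1
  have h2 : t ≤ (c - a) / (2 * c) := min_le_right _ _
  have h3 : c * t ≤ (c - a) / 2 := by
    rw [le_div_iff₀ (by positivity)] at h2
    nlinarith
  nlinarith

lemma inner_coords {d : ℕ} (a b : EuclideanSpace ℝ (Fin d)) : ⟪a, b⟫ = ∑ i, a i * b i := by
  simp [PiLp.inner_apply, RCLike.inner_apply]
  exact Finset.sum_congr rfl fun i _ => mul_comm _ _

lemma norm_combo {d : ℕ} (a b : EuclideanSpace ℝ (Fin d)) (t : ℝ) :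
    ‖(1-t)•a + t•b‖^2 = (1-t)*‖a‖^2 + t*‖b‖^2 - t*(1-t)*‖a-b‖^2 := by
  simp only [← real_inner_self_eq_norm_sq, inner_sub_left, inner_sub_right, inner_add_left,
    inner_add_right, real_inner_smul_left, real_inner_smul_right]
  rw [real_inner_comm b a]; ring

lemma strong_min {d : ℕ} {C : Set (EuclideanSpace ℝ (Fin d))} (hC : Convex ℝ C)
    (φ : EuclideanSpace ℝ (Fin d) → ℝ) (Q : ℝ)
    {z w : EuclideanSpace ℝ (Fin d)} (hz : z ∈ C) (hw : w ∈ C)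
    (hmin : ∀ v ∈ C, φ z ≤ φ v)
    (hseg : ∀ t : ℝ, 0 < t → t < 1 →
      φ ((1 - t) • z + t • w) ≤ (1 - t) * φ z + t * φ w - t * (1 - t) / 2 * Q) :
    φ z + Q / 2 ≤ φ w := by
  have key : ∀ t : ℝ, 0 < t → t < 1 → (Q / 2) * (1 - t) ≤ φ w - φ z := by
    intro t ht0 ht1
    have hmem : (1 - t) • z + t • w ∈ C := hC hz hw (by linarith) (le_of_lt ht0) (by ring)
    have h1 := hmin _ hmem
    have h2 := hseg t ht0 ht1
    have H : t * ((Q / 2) * (1 - t)) ≤ t * (φ w - φ z) := by nlinarith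
    exact le_of_mul_le_mul_left H ht0
  linarith [aux_le_of_forall key]
open scoped RealInnerProductSpace

lemma descent_lemma {d : ℕ} {C : Set (EuclideanSpace ℝ (Fin d))} (hCconv : Convex ℝ C)
    {f : EuclideanSpace ℝ (Fin d) → ℝ}
    {f' : EuclideanSpace ℝ (Fin d) → EuclideanSpace ℝ (Fin d)} {L : ℝ}
    (hLnn : 0 ≤ L) (hfdiff : ∀ v, HasGradientAt f (f' v) v)
    (hflip : ∀ a ∈ C, ∀ b ∈ C, ‖f' a - f' b‖ ≤ L * ‖a - b‖)
    {a b : EuclideanSpace ℝ (Fin d)} (ha : a ∈ C) (hb : b ∈ C) :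
    f b ≤ f a + ⟪f' a, b - a⟫ + L / 2 * ‖b - a‖ ^ 2 := by
  set w : EuclideanSpace ℝ (Fin d) := b - a with hw
  have hseg : ∀ t ∈ Set.Icc (0:ℝ) 1, a + t • w ∈ C := by
    intro t ⟨ht0, ht1⟩
    have := hCconv ha hb (by linarith : (0:ℝ) ≤ 1 - t) ht0 (by ring)
    have he : (1 - t) • a + t • b = a + t • w := by
      simp [hw, smul_sub, sub_smul]; abel
    rwa [he] at this
  set dd : ℝ → ℝ := fun t => ⟪f' (a + t • w), w⟫ with hdd
  have hline : ∀ t : ℝ, HasDerivAt (fun t : ℝ => a + t • w) w t := by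
    intro t; simpa using ((hasDerivAt_id t).smul_const w).const_add a
  have hder : ∀ t : ℝ, HasDerivAt (fun t => f (a + t • w)) (dd t) t := by
    intro t
    exact ((hfdiff _).hasFDerivAt.comp_hasDerivAt t (hline t)).congr_deriv (by
      simp [InnerProductSpace.toDual_apply_apply, hdd])
  have hlip : LipschitzOnWith (Real.toNNReal (L * ‖w‖ ^ 2)) dd (Set.Icc 0 1) := by
    refine LipschitzOnWith.of_dist_le_mul ?_
    intro t ht s hs
    have h1 : dd t - dd s = ⟪f' (a + t • w) - f' (a + s • w), w⟫ := by
      simp [hdd, inner_sub_left]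
    have h2 : ‖f' (a + t • w) - f' (a + s • w)‖ ≤ L * ‖(a + t • w) - (a + s • w)‖ :=
      hflip _ (hseg t ht) _ (hseg s hs)
    have h3 : (a + t • w) - (a + s • w) = (t - s) • w := by
      rw [sub_smul]; abel
    have h4 : |dd t - dd s| ≤ L * (|t - s| * ‖w‖) * ‖w‖ := by
      rw [h1]
      calc |⟪f' (a + t • w) - f' (a + s • w), w⟫| ≤ ‖f' (a + t • w) - f' (a + s • w)‖ * ‖w‖ :=
            abs_real_inner_le_norm _ _
        _ ≤ L * (|t - s| * ‖w‖) * ‖w‖ := by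
            apply mul_le_mul_of_nonneg_right _ (norm_nonneg w)
            rw [h3, norm_smul] at h2; simpa using h2
    rw [Real.dist_eq, Real.dist_eq]
    rw [Real.coe_toNNReal _ (by positivity)]
    calc |dd t - dd s| ≤ L * (|t - s| * ‖w‖) * ‖w‖ := h4
      _ = L * ‖w‖ ^ 2 * |t - s| := by ring
  have hcont : ContinuousOn dd (Set.Icc 0 1) := hlip.continuousOn
  have hint : IntervalIntegrable dd MeasureTheory.volume 0 1 := by
    apply ContinuousOn.intervalIntegrable
    rwa [Set.uIcc_of_le (by norm_num : (0:ℝ) ≤ 1)]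
  have hftc : ∫ t in (0:ℝ)..1, dd t = f (a + (1:ℝ) • w) - f (a + (0:ℝ) • w) := by
    refine intervalIntegral.integral_eq_sub_of_hasDerivAt (fun t _ => hder t) hint
  have hfb : f b - f a = ∫ t in (0:ℝ)..1, dd t := by
    rw [hftc]; simp [hw]
  have hint2 : IntervalIntegrable (fun t => dd t - dd 0) MeasureTheory.volume 0 1 :=
    hint.sub (intervalIntegrable_const)
  have hint3 : IntervalIntegrable (fun t => L * ‖w‖ ^ 2 * t) MeasureTheory.volume 0 1 :=
    (continuous_const.mul continuous_id).intervalIntegrable 0 1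
  have hmono : ∫ t in (0:ℝ)..1, (dd t - dd 0) ≤ ∫ t in (0:ℝ)..1, L * ‖w‖ ^ 2 * t := by
    apply intervalIntegral.integral_mono_on (by norm_num) hint2 hint3
    intro t ht
    have h1 : dd t - dd 0 = ⟪f' (a + t • w) - f' (a + (0:ℝ) • w), w⟫ := by
      simp [hdd, inner_sub_left]
    have h2 : ‖f' (a + t • w) - f' (a + (0:ℝ) • w)‖ ≤ L * (|t| * ‖w‖) := by
      have := hflip _ (hseg t ht) _ (hseg 0 (by norm_num))
      have h3 : (a + t • w) - (a + (0:ℝ) • w) = t • w := by simp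
      rw [h3, norm_smul] at this; simpa using this
    calc dd t - dd 0 ≤ ‖f' (a + t • w) - f' (a + (0:ℝ) • w)‖ * ‖w‖ := by
          rw [h1]; exact real_inner_le_norm _ _
      _ ≤ L * (|t| * ‖w‖) * ‖w‖ := mul_le_mul_of_nonneg_right h2 (norm_nonneg w)
      _ = L * ‖w‖ ^ 2 * t := by rw [abs_of_nonneg ht.1]; ring
  have heval : ∫ t in (0:ℝ)..1, L * ‖w‖ ^ 2 * t = L * ‖w‖ ^ 2 / 2 := by
    rw [intervalIntegral.integral_const_mul, integral_id]; ring
  have hsplit : ∫ t in (0:ℝ)..1, (dd t - dd 0) = (f b - f a) - dd 0 := by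
    rw [intervalIntegral.integral_sub hint intervalIntegrable_const, ← hfb]
    simp
  have hdd0 : dd 0 = ⟪f' a, b - a⟫ := by simp [hdd, hw]
  rw [hsplit, heval, hdd0] at hmono
  linarith [hmono]
open scoped RealInnerProductSpace

lemma grad_convex_lb {d : ℕ} {f : EuclideanSpace ℝ (Fin d) → ℝ}
    {f' : EuclideanSpace ℝ (Fin d) → EuclideanSpace ℝ (Fin d)}
    (hfconv : ConvexOn ℝ Set.univ f) (hfdiff : ∀ v, HasGradientAt f (f' v) v)
    (x u : EuclideanSpace ℝ (Fin d)) :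
    f x + ⟪f' x, u - x⟫ ≤ f u := by
  set ψ : ℝ → ℝ := fun t => f (x + t • (u - x)) with hψ
  have hline : ∀ t : ℝ, HasDerivAt (fun t : ℝ => x + t • (u - x)) (u - x) t := by
    intro t
    simpa using ((hasDerivAt_id t).smul_const (u - x)).const_add x
  have hder : ∀ t : ℝ, HasDerivAt ψ ⟪f' (x + t • (u - x)), u - x⟫ t := by
    intro t
    exact ((hfdiff _).hasFDerivAt.comp_hasDerivAt t (hline t)).congr_deriv (by
      simp [InnerProductSpace.toDual_apply_apply])
  have hconv : ∀ t ∈ Set.Ioo (0:ℝ) 1, slope ψ 0 t ≤ f u - f x := by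
    rintro t ⟨ht0, ht1⟩
    have hc := hfconv.2 (Set.mem_univ x) (Set.mem_univ u) (by linarith : (0:ℝ) ≤ 1 - t)
      (le_of_lt ht0) (by ring)
    have he : (1 - t) • x + t • u = x + t • (u - x) := by
      simp [smul_sub, sub_smul]; abel
    rw [he] at hc
    rw [slope_def_field]
    have hψt : ψ t ≤ (1 - t) * f x + t * f u := hc
    have hψ0 : ψ 0 = f x := by simp [hψ]
    rw [hψ0, div_le_iff₀ (by simpa using ht0)]
    nlinarith
  have hd0 : HasDerivAt ψ ⟪f' x, u - x⟫ 0 := by simpa using hder 0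
  have htends : Filter.Tendsto (slope ψ 0) (nhdsWithin 0 (Set.Ioi 0)) (nhds ⟪f' x, u - x⟫) :=
    (hasDerivAt_iff_tendsto_slope.mp hd0).mono_left
      (nhdsWithin_mono 0 (fun a ha => ne_of_gt ha))
  have hle : ⟪f' x, u - x⟫ ≤ f u - f x := by
    refine le_of_tendsto htends ?_
    filter_upwards [Ioo_mem_nhdsGT_of_mem (by norm_num : (0:ℝ) ∈ Set.Ico 0 1)] with t ht
    exact hconv t ht
  linarith

lemma prox_key {d : ℕ} {C : Set (EuclideanSpace ℝ (Fin d))} (hCconv : Convex ℝ C)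
    {f h : EuclideanSpace ℝ (Fin d) → ℝ}
    {f' : EuclideanSpace ℝ (Fin d) → EuclideanSpace ℝ (Fin d)} {L : ℝ} (hL : 0 < L)
    (hfconv : ConvexOn ℝ Set.univ f) (hhconv : ConvexOn ℝ Set.univ h)
    (hfdiff : ∀ v, HasGradientAt f (f' v) v)
    (hflip : ∀ a ∈ C, ∀ b ∈ C, ‖f' a - f' b‖ ≤ L * ‖a - b‖)
    {xk yp : EuclideanSpace ℝ (Fin d)} (hxk : xk ∈ C) (hyp : yp ∈ C)
    (hmin : ∀ w ∈ C, h yp + ⟪f' xk, yp - xk⟫ + L / 2 * ‖yp - xk‖ ^ 2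
        ≤ h w + ⟪f' xk, w - xk⟫ + L / 2 * ‖w - xk‖ ^ 2)
    {w : EuclideanSpace ℝ (Fin d)} (hw : w ∈ C) :
    f yp + h yp ≤ f w + h w + ⟪(-L) • (yp - xk), xk - w⟫ - ‖(-L) • (yp - xk)‖ ^ 2 / (2 * L) := by
  set v0 := f' xk with hv0
  set φ : EuclideanSpace ℝ (Fin d) → ℝ :=
    fun v => h v + ⟪v0, v - xk⟫ + L / 2 * ‖v - xk‖ ^ 2 with hφ
  have hsm : φ yp + (L * ‖yp - w‖ ^ 2) / 2 ≤ φ w := by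
    apply strong_min hCconv φ (L * ‖yp - w‖ ^ 2) hyp hw hmin
    intro t ht0 ht1
    have hhh := hhconv.2 (Set.mem_univ yp) (Set.mem_univ w) (by linarith : (0:ℝ) ≤ 1 - t)
      ht0.le (by ring)
    have hpt : (1 - t) • yp + t • w - xk = (1 - t) • (yp - xk) + t • (w - xk) := by
      simp [smul_sub, sub_smul]; abel
    have hinner : ⟪v0, (1 - t) • yp + t • w - xk⟫
        = (1 - t) * ⟪v0, yp - xk⟫ + t * ⟪v0, w - xk⟫ := by
      rw [hpt, inner_add_right, real_inner_smul_right, real_inner_smul_right]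
    have hsub : yp - xk - (w - xk) = yp - w := by abel
    have hnorm : ‖(1 - t) • yp + t • w - xk‖ ^ 2
        = (1 - t) * ‖yp - xk‖ ^ 2 + t * ‖w - xk‖ ^ 2 - t * (1 - t) * ‖yp - w‖ ^ 2 := by
      rw [hpt, norm_combo, hsub]
    simp only [hφ]
    rw [hinner, hnorm]
    have hcv : h ((1 - t) • yp + t • w) ≤ (1 - t) * h yp + t * h w := hhh
    nlinarith [hcv]
  have hdes : f yp ≤ f xk + ⟪v0, yp - xk⟫ + L / 2 * ‖yp - xk‖ ^ 2 :=
    descent_lemma hCconv hL.le hfdiff hflip hxk hyp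
  have hcvx : f xk + ⟪v0, w - xk⟫ ≤ f w := grad_convex_lb hfconv hfdiff xk w
  have hid : ⟪(-L) • (yp - xk), xk - w⟫ - ‖(-L) • (yp - xk)‖ ^ 2 / (2 * L)
      = L / 2 * ‖w - xk‖ ^ 2 - L / 2 * ‖yp - w‖ ^ 2 := by
    have h1' : ⟪(-L) • (yp - xk), xk - w⟫ = -L * ⟪yp - xk, xk - w⟫ :=
      real_inner_smul_left _ _ _
    have h2' : ‖(-L) • (yp - xk)‖ ^ 2 = L ^ 2 * ‖yp - xk‖ ^ 2 := by
      rw [norm_smul]; simp [abs_of_pos hL]; ring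
    have hab : yp - w = (yp - xk) + (xk - w) := by abel
    have hbb : w - xk = -(xk - w) := by abel
    rw [h1', h2', hab, hbb, norm_neg, norm_add_sq_real]
    field_simp
    ring
  have hφy : φ yp = h yp + ⟪v0, yp - xk⟫ + L / 2 * ‖yp - xk‖ ^ 2 := rfl
  have hφw : φ w = h w + ⟪v0, w - xk⟫ + L / 2 * ‖w - xk‖ ^ 2 := rfl
  linarith [hid, hsm, hdes, hcvx]

lemma mirror_key {d : ℕ} {C : Set (EuclideanSpace ℝ (Fin d))} (hCconv : Convex ℝ C)
    {c : Fin d → ℝ} (hc : ∀ i, 0 < c i)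
    {q zk zp u : EuclideanSpace ℝ (Fin d)} (hzp : zp ∈ C) (hu : u ∈ C)
    (hmin : ∀ w ∈ C, ⟪q, zp - zk⟫ + 1 / 2 * ∑ i, c i * (zp i - zk i) ^ 2
        ≤ ⟪q, w - zk⟫ + 1 / 2 * ∑ i, c i * (w i - zk i) ^ 2) :
    ⟪q, zk - u⟫ ≤ (∑ i, c i * (u i - zk i) ^ 2) / 2 - (∑ i, c i * (u i - zp i) ^ 2) / 2
      + 1 / 2 * ∑ i, (q i) ^ 2 / c i := by
  set φ : EuclideanSpace ℝ (Fin d) → ℝ :=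
    fun v => ⟪q, v - zk⟫ + 1 / 2 * ∑ i, c i * (v i - zk i) ^ 2 with hφ
  have hsm : φ zp + (∑ i, c i * (u i - zp i) ^ 2) / 2 ≤ φ u := by
    apply strong_min hCconv φ _ hzp hu hmin
    intro t ht0 ht1
    apply le_of_eq
    have hpt : (1 - t) • zp + t • u - zk = (1 - t) • (zp - zk) + t • (u - zk) := by
      simp [smul_sub, sub_smul]; abel
    have hinner : ⟪q, (1 - t) • zp + t • u - zk⟫
        = (1 - t) * ⟪q, zp - zk⟫ + t * ⟪q, u - zk⟫ := by
      rw [hpt, inner_add_right, real_inner_smul_right, real_inner_smul_right]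
    have happ : ∀ i : Fin d, ((1 - t) • zp + t • u) i = (1 - t) * zp i + t * u i := by
      intro i; simp [smul_eq_mul]
    have hquad : ∑ i, c i * (((1 - t) • zp + t • u) i - zk i) ^ 2
        = (1 - t) * ∑ i, c i * (zp i - zk i) ^ 2 + t * ∑ i, c i * (u i - zk i) ^ 2
          - t * (1 - t) * ∑ i, c i * (u i - zp i) ^ 2 := by
      rw [Finset.mul_sum, Finset.mul_sum, Finset.mul_sum, ← Finset.sum_add_distrib,
        ← Finset.sum_sub_distrib]
      apply Finset.sum_congr rfl
      intro i _
      rw [happ i]; ring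
    simp only [hφ]
    rw [hinner, hquad]; ring
  have hlb : -(1 / 2 * ∑ i, (q i) ^ 2 / c i) ≤ φ zp := by
    simp only [hφ]
    have hin : ⟪q, zp - zk⟫ = ∑ i, q i * (zp i - zk i) := by
      rw [inner_coords]
      apply Finset.sum_congr rfl
      intro i _; simp
    rw [hin]
    have hcomb : ∑ i, q i * (zp i - zk i) + 1 / 2 * ∑ i, c i * (zp i - zk i) ^ 2
        + 1 / 2 * ∑ i, (q i) ^ 2 / c i
        = ∑ i, (q i * (zp i - zk i) + 1 / 2 * (c i * (zp i - zk i) ^ 2)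
            + 1 / 2 * ((q i) ^ 2 / c i)) := by
      rw [Finset.mul_sum, Finset.mul_sum, ← Finset.sum_add_distrib, ← Finset.sum_add_distrib]
    have hterm : ∀ i ∈ Finset.univ, (0:ℝ) ≤ q i * (zp i - zk i)
        + 1 / 2 * (c i * (zp i - zk i) ^ 2) + 1 / 2 * ((q i) ^ 2 / c i) := by
      intro i _
      have hci := hc i
      have key : q i * (zp i - zk i) + 1 / 2 * (c i * (zp i - zk i) ^ 2)
          + 1 / 2 * ((q i) ^ 2 / c i) = (c i * (zp i - zk i) + q i) ^ 2 / (2 * c i) := by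
        field_simp; ring
      rw [key]; positivity
    have := Finset.sum_nonneg hterm
    linarith [hcomb ▸ this]
  have hφu : φ u = ⟪q, u - zk⟫ + 1 / 2 * ∑ i, c i * (u i - zk i) ^ 2 := rfl
  have hneg : ⟪q, zk - u⟫ = -⟪q, u - zk⟫ := by
    rw [← inner_neg_right]; congr 1; abel
  rw [hneg]
  linarith [hsm, hlb]
set_option maxHeartbeats 1000000 in
/-- **Corollary 2** for FLAG:
`F(y_{T+1}) − F(u) ≤ LD/T² + D·trace(S_T)/(2 ∑_k η_k)`. -/
theorem flag_corollary_two
    {d : ℕ} (hd : 1 ≤ d) (T : ℕ) (hT : 1 ≤ T)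
    (C : Set (EuclideanSpace ℝ (Fin d)))
    (hCconv : Convex ℝ C) (hCclosed : IsClosed C)
    (D L δ : ℝ) (hL : 0 < L) (hδ : 0 < δ) (hD0 : 0 ≤ D)
    (hD : ∀ a ∈ C, ∀ b ∈ C, ∀ i : Fin d, (a i - b i) ^ 2 ≤ D)
    (f h : EuclideanSpace ℝ (Fin d) → ℝ)
    (f' : EuclideanSpace ℝ (Fin d) → EuclideanSpace ℝ (Fin d))
    (hfconv : ConvexOn ℝ Set.univ f) (hhconv : ConvexOn ℝ Set.univ h)
    (hfdiff : ∀ v, HasGradientAt f (f' v) v)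
    (hflip : ∀ a ∈ C, ∀ b ∈ C, ‖f' a - f' b‖ ≤ L * ‖a - b‖)
    (F : EuclideanSpace ℝ (Fin d) → ℝ) (hF : ∀ v, F v = f v + h v)
    (x y z p g : ℕ → EuclideanSpace ℝ (Fin d))
    (s : ℕ → Fin d → ℝ) (Lk η : ℕ → ℝ)
    (hinit : x 1 = y 1 ∧ y 1 = z 1)
    (hxC : ∀ k, 1 ≤ k → k ≤ T → x k ∈ C)
    -- `y (k+1) = prox (x k)`: it is the minimizer over `C` of the prox objective at `x k`
    (hproxstep : ∀ k, 1 ≤ k → k ≤ T → y (k + 1) ∈ C ∧ ∀ w ∈ C,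
      h (y (k + 1)) + ⟪f' (x k), y (k + 1) - x k⟫ + L / 2 * ‖y (k + 1) - x k‖ ^ 2
        ≤ h w + ⟪f' (x k), w - x k⟫ + L / 2 * ‖w - x k‖ ^ 2)
    (hp : ∀ k, 1 ≤ k → k ≤ T → p k = -L • (y (k + 1) - x k))
    (hpne : ∀ k, 1 ≤ k → k ≤ T → p k ≠ 0)
    (hg : ∀ k, 1 ≤ k → k ≤ T → g k = ‖p k‖⁻¹ • p k)
    (hs : ∀ k, 1 ≤ k → k ≤ T → ∀ i : Fin d,
      s k i = Real.sqrt (∑ j ∈ Finset.Icc 1 k, g j i ^ 2))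
    -- `L_k = L · g_kᵀ S_k⁻¹ g_k` with `S_k = diag(s_k) + δ I`
    (hLk : ∀ k, 1 ≤ k → k ≤ T → Lk k = L * ∑ i : Fin d, g k i ^ 2 / (s k i + δ))
    (hη1 : η 1 = 1 / Lk 1)
    (hηk : ∀ k, 2 ≤ k → k ≤ T →
      η k = 1 / (2 * Lk k)
        + Real.sqrt (1 / (4 * Lk k ^ 2) + η (k - 1) ^ 2 * Lk (k - 1) / Lk k))
    -- mirror-descent step: `z (k+1)` minimizes `⟨η_k p_k, z − z_k⟩ + ½‖z − z_k‖²_{S_k}`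
    (hmirror : ∀ k, 1 ≤ k → k ≤ T → z (k + 1) ∈ C ∧ ∀ w ∈ C,
      ⟪η k • p k, z (k + 1) - z k⟫
          + 1 / 2 * ∑ i : Fin d, (s k i + δ) * (z (k + 1) i - z k i) ^ 2
        ≤ ⟪η k • p k, w - z k⟫
          + 1 / 2 * ∑ i : Fin d, (s k i + δ) * (w i - z k i) ^ 2)
    -- binary-search guarantee
    (hbs : ∀ k, 1 ≤ k → k ≤ T →
      ⟪p k, x k - z k⟫
        ≤ (η k * Lk k - 1) * ⟪p k, y k - x k⟫
          + D * L * (η k * Lk k) / (T : ℝ) ^ 3)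
    (u : EuclideanSpace ℝ (Fin d)) (hu : u ∈ C) :
    F (y (T + 1)) - F u
      ≤ L * D / (T : ℝ) ^ 2
        + D * ((∑ i : Fin d, s T i) + δ * d) / (2 * ∑ k ∈ Finset.Icc 1 T, η k) := by
  classical
  obtain ⟨hx1y, hy1z⟩ := hinit
  have hT0 : (0 : ℝ) < (T : ℝ) := by exact_mod_cast Nat.pos_of_ne_zero (by omega)
  set r : ℕ → ℝ := fun k => ∑ j ∈ Finset.Icc 1 k, η j with hr
  have hr0 : r 0 = 0 := by simp [hr]
  have hrsucc : ∀ m : ℕ, r (m + 1) = r m + η (m + 1) := by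
    intro m
    simp only [hr]
    rw [Finset.sum_Icc_succ_top (by omega : 1 ≤ m + 1)]
  have hyCmem : ∀ k, 1 ≤ k → k ≤ T + 1 → y k ∈ C := by
    intro k hk1 hk2
    match k, hk1 with
    | 1, _ => rw [← hx1y]; exact hxC 1 le_rfl hT
    | (n + 1 + 1), _ => exact (hproxstep (n + 1) (by omega) (by omega)).1
  have hzCmem : ∀ k, 1 ≤ k → k ≤ T + 1 → z k ∈ C := by
    intro k hk1 hk2
    match k, hk1 with
    | 1, _ => rw [← hy1z, ← hx1y]; exact hxC 1 le_rfl hT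
    | (n + 1 + 1), _ => exact (hmirror (n + 1) (by omega) (by omega)).1
  have hsnn : ∀ k, 1 ≤ k → k ≤ T → ∀ i, 0 ≤ s k i := by
    intro k h1 h2 i; rw [hs k h1 h2 i]; exact Real.sqrt_nonneg _
  have hcpos : ∀ k, 1 ≤ k → k ≤ T → ∀ i, 0 < s k i + δ := by
    intro k h1 h2 i; have := hsnn k h1 h2 i; linarith
  have hLkpos : ∀ k, 1 ≤ k → k ≤ T → 0 < Lk k := by
    intro k h1 h2
    rw [hLk k h1 h2]
    apply mul_pos hL
    have hgne : g k ≠ 0 := by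
      rw [hg k h1 h2]
      exact smul_ne_zero (inv_ne_zero (norm_ne_zero_iff.mpr (hpne k h1 h2))) (hpne k h1 h2)
    have hex : ∃ i, g k i ≠ 0 := by
      by_contra hcon
      push_neg at hcon
      exact hgne (by ext i; exact hcon i)
    obtain ⟨i0, hi0⟩ := hex
    apply Finset.sum_pos' (fun i _ => div_nonneg (sq_nonneg _) (hcpos k h1 h2 i).le)
    exact ⟨i0, Finset.mem_univ _,
      div_pos (lt_of_le_of_ne (sq_nonneg _) (Ne.symm (pow_ne_zero 2 hi0))) (hcpos k h1 h2 i0)⟩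
  have hηpos : ∀ k, 1 ≤ k → k ≤ T → 0 < η k := by
    intro k h1 h2
    by_cases hk : k = 1
    · subst hk; rw [hη1]; exact one_div_pos.mpr (hLkpos 1 le_rfl hT)
    · have h2' : 2 ≤ k := by omega
      rw [hηk k h2' h2]
      have hpk := hLkpos k h1 h2
      have hhalf : 0 < 1 / (2 * Lk k) := by positivity
      linarith [Real.sqrt_nonneg (1 / (4 * Lk k ^ 2) + η (k - 1) ^ 2 * Lk (k - 1) / Lk k)]
  have hrnn : ∀ m, m ≤ T → 0 ≤ r m := by
    intro m hm
    apply Finset.sum_nonneg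
    intro j hj
    obtain ⟨hj1, hj2⟩ := Finset.mem_Icc.mp hj
    exact (hηpos j hj1 (le_trans hj2 hm)).le
  have hrle : ∀ k, k ≤ T → r k ≤ r T := by
    intro k hk
    apply Finset.sum_le_sum_of_subset_of_nonneg (Finset.Icc_subset_Icc_right hk)
    intro j hj _
    obtain ⟨hj1, hj2⟩ := Finset.mem_Icc.mp hj
    exact (hηpos j hj1 hj2).le
  have hrTpos : 0 < r T :=
    Finset.sum_pos (fun j hj => hηpos j (Finset.mem_Icc.mp hj).1 (Finset.mem_Icc.mp hj).2)
      ⟨1, Finset.mem_Icc.mpr ⟨le_rfl, hT⟩⟩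
  have hrkey : ∀ k, 1 ≤ k → k ≤ T → η k ^ 2 * Lk k = r k := by
    intro k hk1
    induction k, hk1 using Nat.le_induction with
    | base =>
      intro h1T
      have hL1 := hLkpos 1 le_rfl h1T
      have hr1 : r 1 = η 1 := by simp [hr]
      rw [hr1, hη1]
      field_simp
    | succ n hn ih =>
      intro hnT
      have hn' : n ≤ T := by omega
      have ihn := ih hn'
      have hLc := hLkpos (n + 1) (by omega) hnT
      have hLp := hLkpos n hn hn'
      have hLcne : Lk (n + 1) ≠ 0 := ne_of_gt hLc
      have harg : 0 ≤ 1 / (4 * Lk (n + 1) ^ 2) + η n ^ 2 * Lk n / Lk (n + 1) := by positivity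
      have hrec := hηk (n + 1) (by omega) hnT
      simp only [Nat.add_sub_cancel] at hrec
      have hsq : Real.sqrt (1 / (4 * Lk (n + 1) ^ 2) + η n ^ 2 * Lk n / Lk (n + 1)) ^ 2
          = 1 / (4 * Lk (n + 1) ^ 2) + η n ^ 2 * Lk n / Lk (n + 1) := Real.sq_sqrt harg
      have hsqrtval : Real.sqrt (1 / (4 * Lk (n + 1) ^ 2) + η n ^ 2 * Lk n / Lk (n + 1))
          = η (n + 1) - 1 / (2 * Lk (n + 1)) := by rw [hrec]; ring
      rw [hsqrtval] at hsq
      have expand : (η (n + 1) - 1 / (2 * Lk (n + 1))) ^ 2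
          = η (n + 1) ^ 2 - η (n + 1) / Lk (n + 1) + 1 / (4 * Lk (n + 1) ^ 2) := by
        field_simp; ring
      have e : η (n + 1) ^ 2 - η (n + 1) / Lk (n + 1) = η n ^ 2 * Lk n / Lk (n + 1) := by
        rw [expand] at hsq; linarith [hsq]
      rw [hrsucc n, ← ihn]
      field_simp at e
      linarith [e]
  -- prox step inequality
  have hstep : ∀ k, 1 ≤ k → k ≤ T → ∀ w ∈ C,
      F (y (k + 1)) ≤ F w + ⟪p k, x k - w⟫ - ‖p k‖ ^ 2 / (2 * L) := by
    intro k h1 h2 w hw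
    have hpk := hp k h1 h2
    have key := prox_key hCconv hL hfconv hhconv hfdiff hflip (hxC k h1 h2)
      (hproxstep k h1 h2).1 (hproxstep k h1 h2).2 hw
    rw [hF, hF, hpk]
    linarith [key]
  -- mirror step inequality
  have hmir : ∀ k, 1 ≤ k → k ≤ T →
      η k * ⟪p k, z k - u⟫
        ≤ (∑ i, (s k i + δ) * (u i - z k i) ^ 2) / 2
          - (∑ i, (s k i + δ) * (u i - z (k + 1) i) ^ 2) / 2
          + η k ^ 2 / 2 * ∑ i, (p k i) ^ 2 / (s k i + δ) := by
    intro k h1 h2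
    have key := mirror_key (c := fun i => s k i + δ) (q := η k • p k)
      (zk := z k) (zp := z (k + 1)) hCconv (fun i => hcpos k h1 h2 i)
      (hmirror k h1 h2).1 hu (hmirror k h1 h2).2
    rw [real_inner_smul_left] at key
    have hqs : (1 : ℝ) / 2 * ∑ i, ((η k • p k) i) ^ 2 / (s k i + δ)
        = η k ^ 2 / 2 * ∑ i, (p k i) ^ 2 / (s k i + δ) := by
      rw [Finset.mul_sum, Finset.mul_sum]
      apply Finset.sum_congr rfl
      intro i _
      have : (η k • p k) i = η k * p k i := rfl
      rw [this]; ring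
    rw [hqs] at key
    exact key
  -- per-step combined inequality, summed
  have hstepsum : ∀ m : ℕ, m ≤ T →
      r m * (F (y (m + 1)) - F u)
        ≤ ∑ k ∈ Finset.Icc 1 m,
            (η k * ⟪p k, z k - u⟫ - r k * (‖p k‖ ^ 2 / (2 * L)) + D * L * r k / (T : ℝ) ^ 3) := by
    intro m
    induction m with
    | zero => intro _; simp [hr0]
    | succ n ih =>
      intro hnT
      have hn : n ≤ T := by omega
      have h1 : 1 ≤ n + 1 := by omega
      have hk2 : n + 1 ≤ T := hnT
      have hηk1 := hηpos (n + 1) h1 hk2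
      have hrk := hrkey (n + 1) h1 hk2
      have hrnn_n := hrnn n hn
      have hykC : y (n + 1) ∈ C := hyCmem (n + 1) h1 (by omega)
      have e0 := hstep (n + 1) h1 hk2 u hu
      have esplit : ⟪p (n + 1), x (n + 1) - u⟫
          = ⟪p (n + 1), x (n + 1) - z (n + 1)⟫ + ⟪p (n + 1), z (n + 1) - u⟫ := by
        rw [← inner_add_right]
        congr 1
        abel
      have e2 := hstep (n + 1) h1 hk2 (y (n + 1)) hykC
      have e2' : ⟪p (n + 1), x (n + 1) - y (n + 1)⟫ = -⟪p (n + 1), y (n + 1) - x (n + 1)⟫ := by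
        rw [← inner_neg_right]
        congr 1
        abel
      have e3 := hbs (n + 1) h1 hk2
      have m1 : η (n + 1) * (F (y (n + 1 + 1)) - F u)
          ≤ η (n + 1) * (⟪p (n + 1), x (n + 1) - z (n + 1)⟫ + ⟪p (n + 1), z (n + 1) - u⟫
              - ‖p (n + 1)‖ ^ 2 / (2 * L)) := by
        apply mul_le_mul_of_nonneg_left _ hηk1.le
        rw [esplit] at e0
        linarith [e0]
      have m3 : η (n + 1) * ⟪p (n + 1), x (n + 1) - z (n + 1)⟫
          ≤ (r (n + 1) - η (n + 1)) * ⟪p (n + 1), y (n + 1) - x (n + 1)⟫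
            + D * L * r (n + 1) / (T : ℝ) ^ 3 := by
        have t1 := mul_le_mul_of_nonneg_left e3 hηk1.le
        have t2 : η (n + 1) * ((η (n + 1) * Lk (n + 1) - 1) * ⟪p (n + 1), y (n + 1) - x (n + 1)⟫
              + D * L * (η (n + 1) * Lk (n + 1)) / (T : ℝ) ^ 3)
            = (η (n + 1) ^ 2 * Lk (n + 1) - η (n + 1)) * ⟪p (n + 1), y (n + 1) - x (n + 1)⟫
              + D * L * (η (n + 1) ^ 2 * Lk (n + 1)) / (T : ℝ) ^ 3 := by ring
        rw [t2, hrk] at t1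
        exact t1
      have m4 : (r (n + 1) - η (n + 1)) * ⟪p (n + 1), y (n + 1) - x (n + 1)⟫
          ≤ (r (n + 1) - η (n + 1)) * (F (y (n + 1)) - F (y (n + 1 + 1)) - ‖p (n + 1)‖ ^ 2 / (2 * L)) := by
        apply mul_le_mul_of_nonneg_left
        · linarith [e2, e2']
        · rw [hrsucc n]; linarith [hrnn_n]
      have ihn := ih hn
      rw [Finset.sum_Icc_succ_top (by omega : 1 ≤ n + 1)]
      rw [hrsucc n] at m3 m4 ⊢
      linarith [ihn, m1, m3, m4]
  -- telescoping of the weighted-norm terms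
  have hsmono : ∀ m, 1 ≤ m → m + 1 ≤ T → ∀ i, s m i ≤ s (m + 1) i := by
    intro m h1 h2 i
    rw [hs m h1 (by omega), hs (m + 1) (by omega) h2]
    apply Real.sqrt_le_sqrt
    apply Finset.sum_le_sum_of_subset_of_nonneg (Finset.Icc_subset_Icc_right (by omega))
    intro j _ _
    exact sq_nonneg _
  have htel : ∀ m, 1 ≤ m → m ≤ T →
      ∑ k ∈ Finset.Icc 1 m,
          ((∑ i, (s k i + δ) * (u i - z k i) ^ 2) - (∑ i, (s k i + δ) * (u i - z (k + 1) i) ^ 2))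
        ≤ D * ((∑ i, s m i) + δ * d) - ∑ i, (s m i + δ) * (u i - z (m + 1) i) ^ 2 := by
    intro m hm1
    induction m, hm1 using Nat.le_induction with
    | base =>
      intro h1T
      rw [Finset.Icc_self, Finset.sum_singleton]
      have hz1C : z 1 ∈ C := hzCmem 1 le_rfl (by omega)
      have hbound : ∑ i, (s 1 i + δ) * (u i - z 1 i) ^ 2 ≤ D * ((∑ i, s 1 i) + δ * d) := by
        calc ∑ i, (s 1 i + δ) * (u i - z 1 i) ^ 2
            ≤ ∑ i : Fin d, (s 1 i + δ) * D := by
              apply Finset.sum_le_sum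
              intro i _
              exact mul_le_mul_of_nonneg_left (hD u hu (z 1) hz1C i) (hcpos 1 le_rfl h1T i).le
          _ = D * ((∑ i, s 1 i) + δ * d) := by
              calc ∑ i : Fin d, (s 1 i + δ) * D
                  = ∑ i, (s 1 i * D + δ * D) := by
                    apply Finset.sum_congr rfl; intros; ring
                _ = (∑ i, s 1 i * D) + ∑ _i : Fin d, δ * D := Finset.sum_add_distrib
                _ = (∑ i, s 1 i) * D + (d : ℝ) * (δ * D) := by
                    rw [← Finset.sum_mul, Finset.sum_const, Finset.card_univ, Fintype.card_fin,
                      nsmul_eq_mul]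
                _ = D * ((∑ i, s 1 i) + δ * d) := by ring
      linarith [hbound]
    | succ m hm ihm =>
      intro hST
      have hmT : m ≤ T := by omega
      have ihm' := ihm hmT
      rw [Finset.sum_Icc_succ_top (by omega : 1 ≤ m + 1)]
      have hzC1 : z (m + 1) ∈ C := hzCmem (m + 1) (by omega) (by omega)
      have hkey : (∑ i, (s (m + 1) i + δ) * (u i - z (m + 1) i) ^ 2)
            - (∑ i, (s m i + δ) * (u i - z (m + 1) i) ^ 2)
          ≤ D * (∑ i, s (m + 1) i) - D * (∑ i, s m i) := by
        rw [← Finset.sum_sub_distrib]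
        have : ∀ i ∈ Finset.univ, (s (m + 1) i + δ) * (u i - z (m + 1) i) ^ 2
            - (s m i + δ) * (u i - z (m + 1) i) ^ 2 ≤ (s (m + 1) i - s m i) * D := by
          intro i _
          have h1 : (s (m + 1) i + δ) * (u i - z (m + 1) i) ^ 2
              - (s m i + δ) * (u i - z (m + 1) i) ^ 2
              = (s (m + 1) i - s m i) * (u i - z (m + 1) i) ^ 2 := by ring
          rw [h1]
          apply mul_le_mul_of_nonneg_left (hD u hu (z (m + 1)) hzC1 i)
          linarith [hsmono m hm hST i]
        calc ∑ i, ((s (m + 1) i + δ) * (u i - z (m + 1) i) ^ 2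
              - (s m i + δ) * (u i - z (m + 1) i) ^ 2)
            ≤ ∑ i : Fin d, (s (m + 1) i - s m i) * D := Finset.sum_le_sum this
          _ = D * (∑ i, s (m + 1) i) - D * (∑ i, s m i) := by
              calc ∑ i : Fin d, (s (m + 1) i - s m i) * D
                  = ∑ i, (s (m + 1) i * D - s m i * D) := by
                    apply Finset.sum_congr rfl; intros; ring
                _ = (∑ i, s (m + 1) i * D) - ∑ i, s m i * D := Finset.sum_sub_distrib _ _
                _ = D * (∑ i, s (m + 1) i) - D * (∑ i, s m i) := by
                    rw [← Finset.sum_mul, ← Finset.sum_mul]; ring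
      linarith [ihm', hkey]
    -- final assembly
  have hTne : (T : ℝ) ≠ 0 := ne_of_gt hT0
  have hmainT := hstepsum T le_rfl
  have hDL : 0 ≤ D * L := mul_nonneg hD0 hL.le
  have hper : ∀ k ∈ Finset.Icc 1 T,
      η k * ⟪p k, z k - u⟫ - r k * (‖p k‖ ^ 2 / (2 * L)) + D * L * r k / (T : ℝ) ^ 3
        ≤ ((∑ i, (s k i + δ) * (u i - z k i) ^ 2)
            - (∑ i, (s k i + δ) * (u i - z (k + 1) i) ^ 2)) / 2
          + D * L * r T / (T : ℝ) ^ 3 := by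
    intro k hk
    obtain ⟨h1, h2⟩ := Finset.mem_Icc.mp hk
    have hm := hmir k h1 h2
    have hn0 : ‖p k‖ ≠ 0 := norm_ne_zero_iff.mpr (hpne k h1 h2)
    have hpg : ∀ i, p k i = ‖p k‖ * g k i := by
      intro i
      rw [hg k h1 h2]
      have happly : (‖p k‖⁻¹ • p k) i = ‖p k‖⁻¹ * p k i := rfl
      rw [happly]
      field_simp
    have hpeq : η k ^ 2 / 2 * ∑ i, (p k i) ^ 2 / (s k i + δ)
        = r k * (‖p k‖ ^ 2 / (2 * L)) := by
      have h1' : ∑ i, (p k i) ^ 2 / (s k i + δ)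
          = ‖p k‖ ^ 2 * ∑ i, (g k i) ^ 2 / (s k i + δ) := by
        rw [Finset.mul_sum]
        apply Finset.sum_congr rfl
        intro i _
        rw [hpg i]; ring
      have h2' := hLk k h1 h2
      have h3' := hrkey k h1 h2
      have h4' : ∑ i, (g k i) ^ 2 / (s k i + δ) = Lk k / L := by
        rw [h2']; field_simp
      rw [h1', h4']
      have h5' : η k ^ 2 / 2 * (‖p k‖ ^ 2 * (Lk k / L))
          = (η k ^ 2 * Lk k) * (‖p k‖ ^ 2 / (2 * L)) := by
        field_simp
      rw [h5', h3']
    have hrkT := hrle k h2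
    have hnum : D * L * r k ≤ D * L * r T := by nlinarith [hrkT, hDL]
    have hconstk : D * L * r k / (T : ℝ) ^ 3 ≤ D * L * r T / (T : ℝ) ^ 3 := by
      rw [div_eq_mul_inv, div_eq_mul_inv]
      exact mul_le_mul_of_nonneg_right hnum (by positivity)
    linarith [hm, hpeq, hconstk]
  have hsum2 := Finset.sum_le_sum hper
  rw [Finset.sum_add_distrib] at hmainT
  rw [Finset.sum_add_distrib, Finset.sum_add_distrib] at hsum2
  have hconst : ∑ _k ∈ Finset.Icc 1 T, D * L * r T / (T : ℝ) ^ 3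
      = D * L * r T / (T : ℝ) ^ 2 := by
    rw [Finset.sum_const, Nat.card_Icc, Nat.add_sub_cancel, nsmul_eq_mul]
    field_simp
  rw [hconst] at hsum2
  have hteleT := htel T hT le_rfl
  have hQTnn : 0 ≤ ∑ i, (s T i + δ) * (u i - z (T + 1) i) ^ 2 :=
    Finset.sum_nonneg fun i _ => mul_nonneg (hcpos T hT le_rfl i).le (sq_nonneg _)
  have htele2 : ∑ k ∈ Finset.Icc 1 T,
      ((∑ i, (s k i + δ) * (u i - z k i) ^ 2)
        - (∑ i, (s k i + δ) * (u i - z (k + 1) i) ^ 2)) / 2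
      ≤ D * ((∑ i, s T i) + δ * d) / 2 := by
    rw [← Finset.sum_div]
    linarith [hteleT, hQTnn]
  have hfinal : r T * (F (y (T + 1)) - F u)
      ≤ D * ((∑ i, s T i) + δ * (d : ℝ)) / 2 + D * L * r T / (T : ℝ) ^ 2 := by
    linarith [hmainT, hsum2, htele2]
  have hrTsum : (∑ k ∈ Finset.Icc 1 T, η k) = r T := rfl
  rw [hrTsum]
  have hgoal_eq : L * D / (T : ℝ) ^ 2 + D * ((∑ i, s T i) + δ * d) / (2 * r T)
      = (D * ((∑ i, s T i) + δ * (d : ℝ)) / 2 + D * L * r T / (T : ℝ) ^ 2) / r T := by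
    field_simp
    ring
  rw [hgoal_eq, le_div_iff₀ hrTpos]
  linarith [hfinal]
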